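/- If R_PN = E_{x_p ~ p_+}[E_{x_n ~ p_-}[l(f(x_p), f(x_n))]], R_PU = E_{x_p ~ p_+}[E_{x_u ~ p_u}[l(f(x_p), f(x_u))]], and R_NU = E_{x_u ~ p_u}[E_{x_n ~ p_-}[l(f(x_u), f(x_n))]], where p_u = π p_+ + (1-π) p_- for π ∈ (0,1) and l is the zero-one ranking loss l(u,v) = (1 - sign(u-v))/2, and f is injective on the support (no ties), then R_PN = R_PU + R_NU - 1/2. -/

import Mathlib

open MeasureTheory

/-- The zero-one ranking loss `l₀₁(u,v) = (1 - sign(u - v))/2`. -/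
noncomputable def l01 (u v : ℝ) : ℝ := (1 - Real.sign (u - v)) / 2

lemma measurable_real_sign : Measurable Real.sign := by
  have : Real.sign = fun r : ℝ => if r < 0 then (-1 : ℝ) else if 0 < r then 1 else 0 := by
    funext r; rfl
  rw [this]
  exact Measurable.ite (measurableSet_lt measurable_id measurable_const) measurable_const
    (Measurable.ite (measurableSet_lt measurable_const measurable_id) measurable_const
      measurable_const)

lemma l01_add_swap (u v : ℝ) : l01 u v + l01 v u = 1 := by
  unfold l01
  have : v - u = -(u - v) := by ring
  rw [this, Real.sign_neg]
  ring

lemma l01_bound (u v : ℝ) : ‖l01 u v‖ ≤ 1 := by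
  unfold l01
  rcases Real.sign_apply_eq (u - v) with h | h | h <;> rw [h] <;> norm_num

lemma l01_meas {α : Type*} [MeasurableSpace α] {f : α → ℝ} (hf : Measurable f) :
    Measurable (fun z : α × α => l01 (f z.1) (f z.2)) := by
  unfold l01
  exact (((measurable_const.sub
    (measurable_real_sign.comp ((hf.comp measurable_fst).sub (hf.comp measurable_snd))))).div_const 2)

lemma l01_integrable {α : Type*} [MeasurableSpace α] {f : α → ℝ} (hf : Measurable f)
    (μ ν : Measure α) [IsFiniteMeasure μ] [IsFiniteMeasure ν] :
    Integrable (fun z : α × α => l01 (f z.1) (f z.2)) (μ.prod ν) :=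
  (integrable_const (1 : ℝ)).mono' (l01_meas hf).aestronglyMeasurable
    (Filter.Eventually.of_forall fun z => l01_bound _ _)

lemma smul_prod {α : Type*} [MeasurableSpace α] (c : ENNReal) (μ ν : Measure α)
    [SFinite μ] [SFinite ν] : (c • μ).prod ν = c • μ.prod ν := by
  ext s hs
  simp [Measure.prod_apply hs, MeasureTheory.lintegral_smul_measure]

lemma prod_smul {α : Type*} [MeasurableSpace α] (c : ENNReal) (μ ν : Measure α)
    [SFinite μ] [SFinite ν] : μ.prod (c • ν) = c • μ.prod ν := by
  ext s hs
  simp only [Measure.prod_apply hs, Measure.smul_apply, smul_eq_mul]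
  rw [MeasureTheory.lintegral_const_mul _ (measurable_measure_prodMk_left hs)]

lemma symm_half {α : Type*} [MeasurableSpace α] {f : α → ℝ} (hf : Measurable f)
    (μ : Measure α) [IsProbabilityMeasure μ] :
    ∫ z, l01 (f z.1) (f z.2) ∂(μ.prod μ) = 1 / 2 := by
  have hswap : ∫ z, l01 (f z.1) (f z.2) ∂(μ.prod μ)
      = ∫ z : α × α, l01 (f z.2) (f z.1) ∂(μ.prod μ) :=
    (MeasureTheory.integral_prod_swap (fun z : α × α => l01 (f z.1) (f z.2))).symm
  have hint2 : Integrable (fun z : α × α => l01 (f z.2) (f z.1)) (μ.prod μ) :=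
    (l01_integrable hf μ μ).swap
  have h2 : (∫ z, l01 (f z.1) (f z.2) ∂(μ.prod μ)) +
      (∫ z : α × α, l01 (f z.2) (f z.1) ∂(μ.prod μ)) = 1 := by
    rw [← MeasureTheory.integral_add (l01_integrable hf μ μ) hint2]
    simp_rw [l01_add_swap]
    simp
  linarith [hswap, h2]

theorem pn_pu_nu_decomposition {d : ℕ}
    (pPos pNeg : Measure (Fin d → ℝ))
    [IsProbabilityMeasure pPos] [IsProbabilityMeasure pNeg]
    (π : ℝ) (hπ : π ∈ Set.Ioo (0 : ℝ) 1)
    (f : (Fin d → ℝ) → ℝ) (hf : Measurable f)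
    (hPN : (pPos.prod pNeg) {z | f z.1 = f z.2} = 0)
    (hPP : (pPos.prod pPos) {z | f z.1 = f z.2} = 0)
    (hNN : (pNeg.prod pNeg) {z | f z.1 = f z.2} = 0)
    (pU : Measure (Fin d → ℝ))
    (hpU : pU = ENNReal.ofReal π • pPos + ENNReal.ofReal (1 - π) • pNeg) :
    ∫ z, l01 (f z.1) (f z.2) ∂(pPos.prod pNeg) =
      (∫ z, l01 (f z.1) (f z.2) ∂(pPos.prod pU)) +
      (∫ z, l01 (f z.1) (f z.2) ∂(pU.prod pNeg)) - 1 / 2 := by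
  obtain ⟨hπ0, hπ1⟩ := hπ
  have hπ0' : (0:ℝ) ≤ π := le_of_lt hπ0
  have hπ1' : (0:ℝ) ≤ 1 - π := by linarith
  set g := fun z : (Fin d → ℝ) × (Fin d → ℝ) => l01 (f z.1) (f z.2) with hg
  have h1 : ∫ z, g z ∂(pPos.prod pU)
      = π * (∫ z, g z ∂(pPos.prod pPos)) + (1 - π) * (∫ z, g z ∂(pPos.prod pNeg)) := by
    rw [hpU, Measure.prod_add, prod_smul, prod_smul,
      MeasureTheory.integral_add_measure
        ((l01_integrable hf pPos pPos).smul_measure (by simp))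
        ((l01_integrable hf pPos pNeg).smul_measure (by simp)),
      MeasureTheory.integral_smul_measure, MeasureTheory.integral_smul_measure,
      ENNReal.toReal_ofReal hπ0', ENNReal.toReal_ofReal hπ1']
    simp [smul_eq_mul, hg]
  have h2 : ∫ z, g z ∂(pU.prod pNeg)
      = π * (∫ z, g z ∂(pPos.prod pNeg)) + (1 - π) * (∫ z, g z ∂(pNeg.prod pNeg)) := by
    rw [hpU, Measure.add_prod, smul_prod, smul_prod,
      MeasureTheory.integral_add_measure
        ((l01_integrable hf pPos pNeg).smul_measure (by simp))
        ((l01_integrable hf pNeg pNeg).smul_measure (by simp)),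
      MeasureTheory.integral_smul_measure, MeasureTheory.integral_smul_measure,
      ENNReal.toReal_ofReal hπ0', ENNReal.toReal_ofReal hπ1']
    simp [smul_eq_mul, hg]
  have hPPhalf : ∫ z, g z ∂(pPos.prod pPos) = 1 / 2 := symm_half hf pPos
  have hNNhalf : ∫ z, g z ∂(pNeg.prod pNeg) = 1 / 2 := symm_half hf pNeg
  rw [h1, h2, hPPhalf, hNNhalf]
  ring
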